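/- arXiv:2401.12386 — 5 statements merged into one kernel-verified Lean document; each statement's English description precedes it below -/
import Mathlib

section
/- The Levi-Civita coordinate change γ_i is canonical (symplectic) away from the origin in position: the map (u,v,p_u,p_v) ↦ (x,y,p_x,p_y) given by x = u^2 - v^2 + x_i, y = 2uv, p_x = (u p_u - v p_v)/(2(u^2+v^2)), p_y = (v p_u + u p_v)/(2(u^2+v^2)) satisfies Dγ_i(w)^T J Dγ_i(w) = J at every point w = (u,v,p_u,p_v) with (u,v) ≠ (0,0), where J is the standard 4×4 symplectic matrix. -/
open scoped BigOperators

/-- The Levi-Civita coordinate change `γᵢ` on `ℝ⁴` (coordinates `u, v, p_u, p_v`). -/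
noncomputable def leviCivita (xi : ℝ) (w : Fin 4 → ℝ) : Fin 4 → ℝ :=
  ![w 0 ^ 2 - w 1 ^ 2 + xi,
    2 * w 0 * w 1,
    (w 0 * w 2 - w 1 * w 3) / (2 * (w 0 ^ 2 + w 1 ^ 2)),
    (w 1 * w 2 + w 0 * w 3) / (2 * (w 0 ^ 2 + w 1 ^ 2))]

/-- The standard symplectic matrix `J = [[0, I₂], [-I₂, 0]]`, as a map on `ℝ⁴`. -/
def Jmap (a : Fin 4 → ℝ) : Fin 4 → ℝ := ![a 2, a 3, -a 0, -a 1]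

/-- The standard symplectic form `ω(a,b) = ⟨a, J b⟩` on `ℝ⁴`. -/
def symplForm (a b : Fin 4 → ℝ) : ℝ := ∑ i, a i * Jmap b i

/-- the Levi-Civita coordinate change is canonical:
`Dγᵢ(w)ᵀ J Dγᵢ(w) = J` at every point with `(u,v) ≠ (0,0)`, i.e. the derivative
preserves the standard symplectic form. -/
theorem leviCivita_symplectic (xi : ℝ) (w : Fin 4 → ℝ)
    (hw : (w 0, w 1) ≠ (0, 0)) :
    ∀ a b : Fin 4 → ℝ,
      symplForm (fderiv ℝ (leviCivita xi) w a) (fderiv ℝ (leviCivita xi) w b) =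
        symplForm a b := by
  intro a b
  have hs : w 0 * w 0 + w 1 * w 1 ≠ 0 := by
    intro h
    apply hw
    have h0 : w 0 = 0 := by nlinarith [mul_self_nonneg (w 0), mul_self_nonneg (w 1)]
    have h1 : w 1 = 0 := by nlinarith [mul_self_nonneg (w 0), mul_self_nonneg (w 1)]
    simp [h0, h1]
  have hD : (2:ℝ) * (w 0 * w 0 + w 1 * w 1) ≠ 0 := mul_ne_zero two_ne_zero hs
  have p0 := hasFDerivAt_apply (𝕜 := ℝ) (0 : Fin 4) w
  have p1 := hasFDerivAt_apply (𝕜 := ℝ) (1 : Fin 4) w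
  have p2 := hasFDerivAt_apply (𝕜 := ℝ) (2 : Fin 4) w
  have p3 := hasFDerivAt_apply (𝕜 := ℝ) (3 : Fin 4) w
  have h0 := ((p0.mul p0).sub (p1.mul p1)).add_const xi
  have h1 := ((p0.const_mul (2:ℝ)).mul p1)
  have hDfun := ((p0.mul p0).add (p1.mul p1)).const_mul (2:ℝ)
  have hinv := (hasDerivAt_inv hD).comp_hasFDerivAt w hDfun
  have h2 := ((p0.mul p2).sub (p1.mul p3)).mul hinv
  have h3 := ((p1.mul p2).add (p0.mul p3)).mul hinv
  -- rewrite leviCivita components into the mul/inv form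
  have e0 : (fun x : Fin 4 → ℝ => leviCivita xi x 0)
      = fun x => x 0 * x 0 - x 1 * x 1 + xi := by
    funext x; simp [leviCivita]; ring
  have e1 : (fun x : Fin 4 → ℝ => leviCivita xi x 1)
      = fun x => 2 * x 0 * x 1 := by
    funext x; simp [leviCivita]
  have e2 : (fun x : Fin 4 → ℝ => leviCivita xi x 2)
      = fun x => (x 0 * x 2 - x 1 * x 3) * ((fun y => y⁻¹) ∘ fun y : Fin 4 → ℝ => 2 * (y 0 * y 0 + y 1 * y 1)) x := by
    funext x
    simp only [leviCivita, Matrix.cons_val_two, Matrix.tail_cons, Matrix.head_cons,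
      Function.comp_apply]
    rw [div_eq_mul_inv]
    congr 2
    ring
  have e3 : (fun x : Fin 4 → ℝ => leviCivita xi x 3)
      = fun x => (x 1 * x 2 + x 0 * x 3) * ((fun y => y⁻¹) ∘ fun y : Fin 4 → ℝ => 2 * (y 0 * y 0 + y 1 * y 1)) x := by
    funext x
    simp only [leviCivita, Matrix.cons_val_three, Matrix.tail_cons, Matrix.head_cons,
      Function.comp_apply]
    rw [div_eq_mul_inv]
    congr 2
    ring
  have d0 : DifferentiableAt ℝ (fun x => leviCivita xi x 0) w := by
    rw [e0]; exact h0.differentiableAt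
  have d1 : DifferentiableAt ℝ (fun x => leviCivita xi x 1) w := by
    rw [e1]; exact h1.differentiableAt
  have d2 : DifferentiableAt ℝ (fun x => leviCivita xi x 2) w := by
    rw [e2]; exact h2.differentiableAt
  have d3 : DifferentiableAt ℝ (fun x => leviCivita xi x 3) w := by
    rw [e3]; exact h3.differentiableAt
  have hdiff : ∀ i : Fin 4, DifferentiableAt ℝ (fun x => leviCivita xi x i) w := by
    intro i
    fin_cases i
    exacts [d0, d1, d2, d3]
  have hfd : fderiv ℝ (leviCivita xi) w
      = ContinuousLinearMap.pi (fun i => fderiv ℝ (fun x => leviCivita xi x i) w) :=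
    fderiv_pi hdiff
  rw [hfd]
  simp only [symplForm, Jmap, Fin.sum_univ_four, ContinuousLinearMap.pi_apply]
  rw [e0, e1, e2, e3,
    (show HasFDerivAt (fun x : Fin 4 → ℝ => x 0 * x 0 - x 1 * x 1 + xi) _ w from h0).fderiv,
    (show HasFDerivAt (fun x : Fin 4 → ℝ => 2 * x 0 * x 1) _ w from h1).fderiv,
    (show HasFDerivAt (fun x : Fin 4 → ℝ => (x 0 * x 2 - x 1 * x 3) * ((fun y => y⁻¹) ∘ fun y : Fin 4 → ℝ => 2 * (y 0 * y 0 + y 1 * y 1)) x) _ w from h2).fderiv,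
    (show HasFDerivAt (fun x : Fin 4 → ℝ => (x 1 * x 2 + x 0 * x 3) * ((fun y => y⁻¹) ∘ fun y : Fin 4 → ℝ => 2 * (y 0 * y 0 + y 1 * y 1)) x) _ w from h3).fderiv]
  simp only [ContinuousLinearMap.add_apply, ContinuousLinearMap.sub_apply,
    ContinuousLinearMap.smul_apply, ContinuousLinearMap.coe_smul', Pi.smul_apply,
    ContinuousLinearMap.proj_apply, ContinuousLinearMap.coe_comp', Function.comp_apply,
    Matrix.cons_val_zero, Matrix.cons_val_one, Matrix.head_cons, Matrix.cons_val_two,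
    Matrix.tail_cons, Matrix.cons_val_three, smul_eq_mul, ContinuousLinearMap.smulRight_apply,
    ContinuousLinearMap.one_apply, nsmul_eq_mul, Nat.cast_ofNat, Pi.mul_apply, Pi.add_apply,
    Pi.sub_apply]
  field_simp
  have hq : w 0 ^ 2 * w 1 ^ 2 * 2 + w 0 ^ 4 + w 1 ^ 4 ≠ 0 := by
    have : w 0 ^ 2 * w 1 ^ 2 * 2 + w 0 ^ 4 + w 1 ^ 4 = (w 0 * w 0 + w 1 * w 1) ^ 2 := by ring
    rw [this]; exact pow_ne_zero 2 hs
  linear_combination (2 * (a 0 * b 2 + a 1 * b 3 - b 0 * a 2 - b 1 * a 3)) * (inv_mul_cancel₀ hq)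
end

section
/- If N ⇒^f M is a covering relation between h-sets in the plane, and the rigorous-verification conditions π_2(f_c(N_c)) ⊂ (-1,1), π_1(f_c({-1}×[-1,1])) < -1, and π_1(f_c({1}×[-1,1])) > 1 hold for a continuous map f_c: [-1,1]^2 → ℝ^2, then f_c satisfies the covering relation N_c ⇒ M_c; i.e., there exists a homotopy h: [0,1]×N_c → ℝ^2 with h_0 = f_c, h([0,1], ∂[-1,1]×[-1,1]) ∩ [-1,1]^2 = ∅, h([0,1], N_c) ∩ ([-1,1]×{-1,1}) = ∅, and h_1(p,q) = (ap, 0) for some a > 1. -/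
open Set

/-- The model square `N_c = [-1,1]²`. -/
def Ncsq : Set (ℝ × ℝ) := Icc (-1, -1) (1, 1)

/-- The exit set `N_c⁻ = {-1,1} × [-1,1]`. -/
def NcExit : Set (ℝ × ℝ) := {z ∈ Ncsq | z.1 = -1 ∨ z.1 = 1}

/-- The entry set `M_c⁺ = [-1,1] × {-1,1}`. -/
def NcEntry : Set (ℝ × ℝ) := {z ∈ Ncsq | z.2 = -1 ∨ z.2 = 1}

/-- if a continuous map `f_c` satisfies the contraction condition
`π₂(f_c(N_c)) ⊂ (-1,1)`, the left expansion condition `π₁(f_c({-1}×[-1,1])) < -1`,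
and the right expansion condition `π₁(f_c({1}×[-1,1])) > 1`, then `f_c` realizes a
covering relation: there is a homotopy `h` with `h₀ = f_c`,
`h([0,1], N_c⁻) ∩ N_c = ∅`, `h([0,1], N_c) ∩ M_c⁺ = ∅`, and `h₁(p,q) = (ap, 0)`
for some `a > 1`. -/
theorem covering_from_inequalities (fc : ℝ × ℝ → ℝ × ℝ)
    (hcont : ContinuousOn fc Ncsq)
    (hcontr : ∀ z ∈ Ncsq, (fc z).2 ∈ Ioo (-1 : ℝ) 1)
    (hleft : ∀ z ∈ Ncsq, z.1 = -1 → (fc z).1 < -1)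
    (hright : ∀ z ∈ Ncsq, z.1 = 1 → (fc z).1 > 1) :
    ∃ (h : ℝ → ℝ × ℝ → ℝ × ℝ) (a : ℝ), 1 < a ∧
      ContinuousOn (fun q : ℝ × (ℝ × ℝ) => h q.1 q.2) (Icc (0 : ℝ) 1 ×ˢ Ncsq) ∧
      (∀ z ∈ Ncsq, h 0 z = fc z) ∧
      (∀ t ∈ Icc (0 : ℝ) 1, ∀ z ∈ NcExit, h t z ∉ Ncsq) ∧
      (∀ t ∈ Icc (0 : ℝ) 1, ∀ z ∈ Ncsq, h t z ∉ NcEntry) ∧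
      (∀ z ∈ Ncsq, h 1 z = (a * z.1, 0)) := by
  use fun t z => ((1 - t) * (fc z).1 + t * (2 * z.1), (1 - t) * (fc z).2), 2
  have hfc1 : ContinuousOn (fun q : ℝ × (ℝ × ℝ) => fc q.2)
      (Icc (0 : ℝ) 1 ×ˢ Ncsq) :=
    hcont.comp continuousOn_snd (fun q hq => hq.2)
  refine ⟨by norm_num, ?_, ?_, ?_, ?_, ?_⟩
  · exact ((((continuousOn_const.sub continuousOn_fst).mul
        hfc1.fst).add
        (continuousOn_fst.mul (continuousOn_const.mul
          (continuous_fst.comp continuous_snd).continuousOn))).prodMk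
        ((continuousOn_const.sub continuousOn_fst).mul
        hfc1.snd))
  · intro z hz; simp
  · intro t ht z hz hmem
    rw [Ncsq, mem_Icc, Prod.le_def, Prod.le_def] at hmem
    obtain ⟨⟨h1, _⟩, ⟨h2, _⟩⟩ := hmem
    obtain ⟨hzN, hz1 | hz1⟩ := hz
    · have := hleft z hzN hz1
      rw [hz1] at h1 h2; simp only at h1 h2
      nlinarith [ht.1, ht.2, mul_nonneg (by linarith [ht.2] : (0:ℝ) ≤ 1 - t)
        (by linarith : (0:ℝ) ≤ -1 - (fc z).1)]
    · have := hright z hzN hz1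
      rw [hz1] at h1 h2; simp only at h1 h2
      nlinarith [ht.1, ht.2, mul_nonneg (by linarith [ht.2] : (0:ℝ) ≤ 1 - t)
        (by linarith : (0:ℝ) ≤ (fc z).1 - 1)]
  · intro t ht z hz hmem
    obtain ⟨_, habs⟩ := hmem
    have h2 := hcontr z hz
    have h1 : |(1 - t) * (fc z).2| < 1 := by
      rw [abs_mul]
      calc |1 - t| * |(fc z).2| ≤ 1 * |(fc z).2| := by
            apply mul_le_mul_of_nonneg_right _ (abs_nonneg _)
            rw [abs_le]; constructor <;> linarith [ht.1, ht.2]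
        _ = |(fc z).2| := one_mul _
        _ < 1 := abs_lt.2 ⟨h2.1, h2.2⟩
    rw [abs_lt] at h1
    rcases habs with h | h <;> simp only at h <;> rw [h] at h1 <;> linarith [h1.1, h1.2]
  · intro z hz; simp [mul_comm]
end

section
/- Symmetry of Poincaré covering relations: assume the Hamiltonian system is S-symmetric (Γ∘S = Γ, ∇Γ∘S = -S∘∇Γ, and the flow satisfies S(Φ_s(w)) = Φ_{-s}(S(w))). Let N_1, N_2 be h-sets on sections Σ_1, Σ_2 with parametrizations ψ_1, ψ_2, and let P: Σ_1 → Σ_2 and P^S: SΣ_2 → SΣ_1 be Poincaré maps with S∘P = (P^S)^{-1}∘S. If N_1 P-covers N_2 in local coordinates (N_1 ⇒^{P_{21}} N_2 with P_{21} = ψ_2^{-1}∘P∘ψ_1), then SN_2 P^S-backcovers SN_1, i.e. N_1 ⇒^{(P^S_{12})^{-1}} N_2 where P^S_{12} = (Sψ_1)^{-1}∘P^S∘(Sψ_2). Concretely: under the hypothesis S∘P = (P^S)^{-1}∘S, the map (P^S_{12})^{-1} equals P_{21}, so the backcovering follows from the covering. -/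
open Set

/-- Covering relation in local coordinates: the map `fc : [-1,1]² → ℝ²` admits a
homotopy as in the Gidea–Zgliczyński definition. -/
def CoversLocal (fc : ℝ × ℝ → ℝ × ℝ) : Prop :=
  ∃ (h : ℝ → ℝ × ℝ → ℝ × ℝ) (a : ℝ), 1 < a ∧
    ContinuousOn (fun q : ℝ × (ℝ × ℝ) => h q.1 q.2) (Icc (0 : ℝ) 1 ×ˢ Ncsq) ∧
    (∀ z ∈ Ncsq, h 0 z = fc z) ∧
    (∀ t ∈ Icc (0 : ℝ) 1, ∀ z ∈ NcExit, h t z ∉ Ncsq) ∧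
    (∀ t ∈ Icc (0 : ℝ) 1, ∀ z ∈ Ncsq, h t z ∉ NcEntry) ∧
    (∀ z ∈ Ncsq, h 1 z = (a * z.1, 0))

/-- symmetry of Poincaré covering relations. With `S` an involution,
`P : Σ₁ → Σ₂` and `P^S : SΣ₂ → SΣ₁` Poincaré maps satisfying `S∘P = (P^S)⁻¹∘S`
(here `PSinv` denotes `(P^S)⁻¹`), and `ψ₁, ψ₂` parametrizations of the sections with
left inverses `ψ₁inv, ψ₂inv`, the local map `(P^S₁₂)⁻¹ = ψ₂⁻¹∘S⁻¹∘(P^S)⁻¹∘S∘ψ₁`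
coincides with `P₂₁ = ψ₂⁻¹∘P∘ψ₁`; hence if `N₁ ⇒^{P₂₁} N₂` then the covering
`N₁ ⇒^{(P^S₁₂)⁻¹} N₂` (i.e. the backcovering `SN₂ ⇐^{P^S} SN₁`) holds. -/
theorem symmetry_backcovering {α : Type*}
    (S : α ≃ α) (hS : ∀ w, S (S w) = w)
    (P PSinv : α → α)
    (hsym : ∀ w, S (P w) = PSinv (S w))
    (ψ₁ ψ₂ : ℝ × ℝ → α) (ψ₁inv ψ₂inv : α → ℝ × ℝ)
    (hψ₁ : ∀ z, ψ₁inv (ψ₁ z) = z) (hψ₂ : ∀ z, ψ₂inv (ψ₂ z) = z)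
    (hψ₂P : ∀ z, ψ₂ (ψ₂inv (P (ψ₁ z))) = P (ψ₁ z))
    (hcov : CoversLocal (fun z => ψ₂inv (P (ψ₁ z)))) :
    (∀ z, ψ₂inv (S.symm (PSinv (S (ψ₁ z)))) = ψ₂inv (P (ψ₁ z))) ∧
      CoversLocal (fun z => ψ₂inv (S.symm (PSinv (S (ψ₁ z))))) := by
  have key : ∀ z, ψ₂inv (S.symm (PSinv (S (ψ₁ z)))) = ψ₂inv (P (ψ₁ z)) := by
    intro z
    rw [← hsym, Equiv.symm_apply_apply]
  refine ⟨key, ?_⟩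
  have : (fun z => ψ₂inv (S.symm (PSinv (S (ψ₁ z))))) = fun z => ψ₂inv (P (ψ₁ z)) :=
    funext key
  rw [this]
  exact hcov
end

section
/- Covering relations near a planar hyperbolic fixed point (Lemma on rectangles): let f = (f_1,f_2): [-1,1]^2 → ℝ^2 be C^1 with f(0) = 0, and suppose there exist positive reals α, β, ρ, c with ρ > β and α > 2c + ρ such that for all z ∈ [-1,1]^2: ∂f_1/∂z_1(z) > α, ∂f_1/∂z_2(z) ∈ (-c, 0), ∂f_2/∂z_1(z) ∈ (0, c), ∂f_2/∂z_2(z) ∈ (β, ρ). Then for any 0 < a < b < 1, setting a' = aβ and b' = (c+ρ)b, the rectangle R_{a,b} = [0,b]×[a,b] f-covers both R_{a',b'} = [0,b']×[a',b'] and Q_{a',b'} = [a',b']×[a',b']; concretely: (i) π_2 f(R_{a,b}) ⊂ (a', b'), (ii) π_1 f({0}×[a,b]) < 0 < a', and (iii) π_1 f({b}×[a,b]) > b'. -/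
open Set

/-- The square `[-1,1]² ⊂ ℝ²`. -/
def sq2 : Set (ℝ × ℝ) := Icc (-1, -1) (1, 1)

lemma seg_mem_sq2 (z : ℝ × ℝ) (h1 : 0 ≤ z.1) (h1' : z.1 ≤ 1) (h2 : 0 ≤ z.2)
    (h2' : z.2 ≤ 1) : ∀ t ∈ Icc (0:ℝ) 1, t • z ∈ sq2 := by
  obtain ⟨x, y⟩ := z
  simp only [Prod.fst, Prod.snd] at h1 h1' h2 h2'
  intro t ht
  simp only [mem_Icc] at ht
  simp only [sq2, Prod.smul_mk, smul_eq_mul, mem_Icc, Prod.mk_le_mk]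
  refine ⟨⟨?_, ?_⟩, ?_, ?_⟩ <;> nlinarith [ht.1, ht.2]

lemma lower_bound (f : ℝ × ℝ → ℝ × ℝ) (hf : ContDiffOn ℝ 1 f sq2) (hf0 : f 0 = 0)
    (L : (ℝ × ℝ) →L[ℝ] ℝ) (z : ℝ × ℝ) (hz : ∀ t ∈ Icc (0:ℝ) 1, t • z ∈ sq2)
    (m : ℝ) (hm : ∀ w ∈ sq2, m < L (fderivWithin ℝ f sq2 w z)) :
    m < L (f z) := by
  set g : ℝ → ℝ := fun t => L (f (t • z)) - t * m with hg
  have hderiv : ∀ t ∈ Icc (0:ℝ) 1,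
      HasDerivWithinAt g (L (fderivWithin ℝ f sq2 (t • z) z) - m) (Icc 0 1) t := by
    intro t ht
    have hp : HasDerivWithinAt (fun s : ℝ => s • z) z (Icc 0 1) t := by
      simpa using ((hasDerivAt_id t).smul_const z).hasDerivWithinAt
    have hfd : HasFDerivWithinAt f (fderivWithin ℝ f sq2 (t • z)) sq2 (t • z) :=
      (hf.differentiableOn one_ne_zero (t • z) (hz t ht)).hasFDerivWithinAt
    have hcomp := hfd.comp_hasDerivWithinAt t hp (fun s hs => hz s hs)
    have hL := L.hasFDerivAt.comp_hasDerivWithinAt t hcomp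
    exact hL.sub ((hasDerivAt_mul_const m).hasDerivWithinAt)
  have hmono : StrictMonoOn g (Icc 0 1) := by
    apply strictMonoOn_of_deriv_pos (convex_Icc 0 1)
    · exact fun t ht => (hderiv t ht).continuousWithinAt
    · intro t ht
      rw [interior_Icc] at ht
      have h := (hderiv t (Ioo_subset_Icc_self ht)).hasDerivAt (Icc_mem_nhds ht.1 ht.2)
      rw [h.deriv]
      have := hm (t • z) (hz t (Ioo_subset_Icc_self ht))
      linarith
  have h01 := hmono (left_mem_Icc.2 zero_le_one) (right_mem_Icc.2 zero_le_one) zero_lt_one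
  simp only [hg, zero_smul, hf0, map_zero, zero_mul, sub_zero, one_smul, one_mul] at h01
  linarith

lemma fderiv_decomp (D : (ℝ × ℝ) →L[ℝ] (ℝ × ℝ)) (z : ℝ × ℝ) :
    D z = z.1 • D (1, 0) + z.2 • D (0, 1) := by
  have : z = z.1 • ((1:ℝ), (0:ℝ)) + z.2 • ((0:ℝ), (1:ℝ)) := by
    simp [Prod.ext_iff]
  conv_lhs => rw [this]
  rw [map_add, map_smul, map_smul]

/-- covering relations near a planar hyperbolic fixed point
(rectangle lemma). Under the derivative bounds, for `0 < a < b < 1` and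
`a' = aβ`, `b' = (c+ρ)b`, the rectangle `R_{a,b} = [0,b]×[a,b]` `f`-covers
`R_{a',b'}` and `Q_{a',b'}`: (i) `π₂ f(R_{a,b}) ⊂ (a', b')`,
(ii) `π₁ f({0}×[a,b]) < 0 < a'`, (iii) `π₁ f({b}×[a,b]) > b'`. -/
theorem rectangle_covering_lemma
    (f : ℝ × ℝ → ℝ × ℝ) (hf : ContDiffOn ℝ 1 f sq2) (hf0 : f 0 = 0)
    (α β ρ c : ℝ) (hα : 0 < α) (hβ : 0 < β) (hρ : 0 < ρ) (hc : 0 < c)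
    (hρβ : β < ρ) (hαc : 2 * c + ρ < α)
    (hd11 : ∀ z ∈ sq2, α < (fderivWithin ℝ f sq2 z (1, 0)).1)
    (hd12 : ∀ z ∈ sq2, (fderivWithin ℝ f sq2 z (0, 1)).1 ∈ Ioo (-c) 0)
    (hd21 : ∀ z ∈ sq2, (fderivWithin ℝ f sq2 z (1, 0)).2 ∈ Ioo 0 c)
    (hd22 : ∀ z ∈ sq2, (fderivWithin ℝ f sq2 z (0, 1)).2 ∈ Ioo β ρ)
    (a b : ℝ) (ha : 0 < a) (hab : a < b) (hb : b < 1) :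
    (∀ z ∈ Icc ((0 : ℝ), a) (b, b), (f z).2 ∈ Ioo (a * β) ((c + ρ) * b)) ∧
    (0 < a * β) ∧
    (∀ y ∈ Icc a b, (f (0, y)).1 < 0) ∧
    (∀ y ∈ Icc a b, (c + ρ) * b < (f (b, y)).1) := by
  have hdecomp : ∀ w ∈ sq2, ∀ z : ℝ × ℝ,
      (fderivWithin ℝ f sq2 w z).1 = z.1 * (fderivWithin ℝ f sq2 w (1, 0)).1
        + z.2 * (fderivWithin ℝ f sq2 w (0, 1)).1 ∧
      (fderivWithin ℝ f sq2 w z).2 = z.1 * (fderivWithin ℝ f sq2 w (1, 0)).2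
        + z.2 * (fderivWithin ℝ f sq2 w (0, 1)).2 := by
    intro w _ z
    rw [fderiv_decomp (fderivWithin ℝ f sq2 w) z]
    simp [Prod.ext_iff]
  refine ⟨?_, mul_pos ha hβ, ?_, ?_⟩
  · intro z hz
    simp only [mem_Icc, Prod.mk_le_mk] at hz
    obtain ⟨⟨hx0, hya⟩, ⟨hxb, hyb⟩⟩ := hz
    simp only at hx0 hya hxb hyb
    have hseg := seg_mem_sq2 z hx0 (le_of_lt (lt_of_le_of_lt hxb hb)) (le_trans ha.le hya)
      (le_of_lt (lt_of_le_of_lt hyb hb))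
    constructor
    · have := lower_bound f hf hf0 (ContinuousLinearMap.snd ℝ ℝ ℝ) z hseg (a * β) ?_
      · simpa using this
      intro w hw
      simp only [ContinuousLinearMap.coe_snd', (hdecomp w hw z).2]
      have h21 := hd21 w hw
      have h22 := hd22 w hw
      simp only [mem_Ioo] at h21 h22
      nlinarith [h21.1, h22.1]
    · have := lower_bound f hf hf0 (-(ContinuousLinearMap.snd ℝ ℝ ℝ)) z hseg
        (-((c + ρ) * b)) ?_
      · simp only [ContinuousLinearMap.neg_apply, ContinuousLinearMap.coe_snd'] at this
        linarith
      intro w hw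
      simp only [ContinuousLinearMap.neg_apply, ContinuousLinearMap.coe_snd',
        (hdecomp w hw z).2]
      have h21 := hd21 w hw
      have h22 := hd22 w hw
      simp only [mem_Ioo] at h21 h22
      nlinarith [h21.1, h21.2, h22.2]
  · intro y hy
    simp only [mem_Icc] at hy
    have hseg := seg_mem_sq2 (0, y) le_rfl zero_le_one (le_trans ha.le hy.1)
      (le_of_lt (lt_of_le_of_lt hy.2 hb))
    have := lower_bound f hf hf0 (-(ContinuousLinearMap.fst ℝ ℝ ℝ)) (0, y) hseg 0 ?_
    · simp only [ContinuousLinearMap.neg_apply, ContinuousLinearMap.coe_fst'] at this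
      linarith
    intro w hw
    simp only [ContinuousLinearMap.neg_apply, ContinuousLinearMap.coe_fst',
      (hdecomp w hw (0, y)).1]
    have h12 := hd12 w hw
    simp only [mem_Ioo] at h12
    nlinarith [h12.2]
  · intro y hy
    simp only [mem_Icc] at hy
    have hseg := seg_mem_sq2 (b, y) (le_of_lt (ha.trans hab)) hb.le (le_trans ha.le hy.1)
      (le_of_lt (lt_of_le_of_lt hy.2 hb))
    have := lower_bound f hf hf0 (ContinuousLinearMap.fst ℝ ℝ ℝ) (b, y) hseg ((c + ρ) * b) ?_
    · simpa using this
    intro w hw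
    simp only [ContinuousLinearMap.coe_fst', (hdecomp w hw (b, y)).1]
    have h11 := hd11 w hw
    have h12 := hd12 w hw
    simp only [mem_Ioo] at h12
    nlinarith [h12.1, h12.2]
end

section
/- Iterated approach to the fixed point: under the hypotheses of the rectangle covering lemma (f C^1 on [-1,1]^2, f(0)=0, derivative bounds ∂f_1/∂z_1 > α, ∂f_1/∂z_2 ∈ (-c,0), ∂f_2/∂z_1 ∈ (0,c), ∂f_2/∂z_2 ∈ (β,ρ), with α > 2c+ρ and additionally c + ρ < 1), for fixed 0 < a < b < 1 define a_k = β^k a and b_k = (c+ρ)^k b for k ∈ ℕ. Then 0 < a_k < b_k < 1 for all k, the covering conditions hold for every k ((i) π_2 f([0,b_k]×[a_k,b_k]) ⊂ (a_{k+1}, b_{k+1}), (ii) π_1 f({0}×[a_k,b_k]) < 0, (iii) π_1 f({b_k}×[a_k,b_k]) > b_{k+1}), and b_k → 0 as k → ∞, so the rectangles accumulate at the fixed point 0 while all remaining in the closed first quadrant minus the origin. -/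
open Set Filter

lemma segMVT (f : ℝ × ℝ → ℝ × ℝ) (hf : ContDiffOn ℝ 1 f sq2)
    (π : (ℝ × ℝ) →L[ℝ] ℝ) (z v : ℝ × ℝ)
    (hzv : ∀ s ∈ Icc (-1:ℝ) 1, z + s • v ∈ sq2)
    (t : ℝ) (ht : 0 < t) (ht1 : t ≤ 1) :
    ∃ ξ ∈ Ioo 0 t,
      π (f (z + t • v)) - π (f z) = π (fderivWithin ℝ f sq2 (z + ξ • v) v) * t := by
  set g : ℝ → ℝ := fun s => π (f (z + s • v)) with hg
  have hφ : ∀ s : ℝ, HasDerivAt (fun s : ℝ => z + s • v) v s := by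
    intro s
    simpa using ((hasDerivAt_id s).smul_const v).const_add z
  have hder : ∀ s ∈ Icc (-1:ℝ) 1,
      HasDerivWithinAt g (π (fderivWithin ℝ f sq2 (z + s • v) v)) (Icc (-1) 1) s := by
    intro s hs
    have hfd : HasFDerivWithinAt f (fderivWithin ℝ f sq2 (z + s • v)) sq2 (z + s • v) :=
      (hf.differentiableOn one_ne_zero _ (hzv s hs)).hasFDerivWithinAt
    have h1 : HasDerivWithinAt (fun s : ℝ => f (z + s • v))
        (fderivWithin ℝ f sq2 (z + s • v) v) (Icc (-1) 1) s :=
      hfd.comp_hasDerivWithinAt s ((hφ s).hasDerivWithinAt) (fun u hu => hzv u hu)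
    exact (π.hasFDerivAt.comp_hasDerivWithinAt s h1)
  have hsub : Icc (0:ℝ) t ⊆ Icc (-1) 1 := Icc_subset_Icc (by linarith) ht1
  have hcont : ContinuousOn g (Icc 0 t) := fun s hs =>
    ((hder s (hsub hs)).continuousWithinAt).mono hsub
  have hderiv : ∀ s ∈ Ioo (0:ℝ) t,
      HasDerivAt g (π (fderivWithin ℝ f sq2 (z + s • v) v)) s := by
    intro s hs
    exact (hder s (hsub (Ioo_subset_Icc_self hs))).hasDerivAt
      (Icc_mem_nhds (by linarith [hs.1]) (by linarith [hs.2]))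
  obtain ⟨ξ, hξ, heq⟩ := exists_hasDerivAt_eq_slope g _ ht hcont hderiv
  refine ⟨ξ, hξ, ?_⟩
  have ht' : t - 0 ≠ 0 := by linarith
  have : g t - g 0 = π (fderivWithin ℝ f sq2 (z + ξ • v) v) * (t - 0) := by
    field_simp at heq ⊢; linarith [heq]
  simpa [hg] using this

lemma mvtV (f : ℝ × ℝ → ℝ × ℝ) (hf : ContDiffOn ℝ 1 f sq2)
    (π : (ℝ × ℝ) →L[ℝ] ℝ) (x : ℝ) (hx : x ∈ Icc (-1:ℝ) 1)
    (t : ℝ) (ht : 0 < t) (ht1 : t ≤ 1) :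
    ∃ ξ ∈ Ioo 0 t,
      π (f (x, t)) - π (f (x, 0)) = π (fderivWithin ℝ f sq2 (x, ξ) (0, 1)) * t := by
  have key : ∀ s : ℝ, ((x, 0) : ℝ × ℝ) + s • ((0:ℝ), (1:ℝ)) = (x, s) := by
    intro s; simp [Prod.ext_iff]
  have hzv : ∀ s ∈ Icc (-1:ℝ) 1, ((x, 0) : ℝ × ℝ) + s • ((0:ℝ), (1:ℝ)) ∈ sq2 := by
    intro s hs; rw [key]
    simp only [sq2, mem_Icc, Prod.le_def]
    exact ⟨⟨hx.1, hs.1⟩, ⟨hx.2, hs.2⟩⟩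
  obtain ⟨ξ, hξ, heq⟩ := segMVT f hf π (x, 0) ((0:ℝ), (1:ℝ)) hzv t ht ht1
  rw [key, key] at heq
  exact ⟨ξ, hξ, heq⟩

lemma mvtH (f : ℝ × ℝ → ℝ × ℝ) (hf : ContDiffOn ℝ 1 f sq2)
    (π : (ℝ × ℝ) →L[ℝ] ℝ) (y : ℝ) (hy : y ∈ Icc (-1:ℝ) 1)
    (t : ℝ) (ht : 0 < t) (ht1 : t ≤ 1) :
    ∃ ξ ∈ Ioo 0 t,
      π (f (t, y)) - π (f (0, y)) = π (fderivWithin ℝ f sq2 (ξ, y) (1, 0)) * t := by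
  have key : ∀ s : ℝ, ((0, y) : ℝ × ℝ) + s • ((1:ℝ), (0:ℝ)) = (s, y) := by
    intro s; simp [Prod.ext_iff]
  have hzv : ∀ s ∈ Icc (-1:ℝ) 1, ((0, y) : ℝ × ℝ) + s • ((1:ℝ), (0:ℝ)) ∈ sq2 := by
    intro s hs; rw [key]
    simp only [sq2, mem_Icc, Prod.le_def]
    exact ⟨⟨hs.1, hy.1⟩, ⟨hs.2, hy.2⟩⟩
  obtain ⟨ξ, hξ, heq⟩ := segMVT f hf π (0, y) ((1:ℝ), (0:ℝ)) hzv t ht ht1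
  rw [key, key] at heq
  exact ⟨ξ, hξ, heq⟩

lemma stepCover
    (f : ℝ × ℝ → ℝ × ℝ) (hf : ContDiffOn ℝ 1 f sq2) (hf0 : f 0 = 0)
    (α β ρ c : ℝ) (hα : 0 < α) (hβ : 0 < β) (hρ : 0 < ρ) (hc : 0 < c)
    (hαc : 2 * c + ρ < α)
    (hd11 : ∀ z ∈ sq2, α < (fderivWithin ℝ f sq2 z (1, 0)).1)
    (hd12 : ∀ z ∈ sq2, (fderivWithin ℝ f sq2 z (0, 1)).1 ∈ Ioo (-c) 0)
    (hd21 : ∀ z ∈ sq2, (fderivWithin ℝ f sq2 z (1, 0)).2 ∈ Ioo 0 c)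
    (hd22 : ∀ z ∈ sq2, (fderivWithin ℝ f sq2 z (0, 1)).2 ∈ Ioo β ρ)
    (a' b' : ℝ) (ha' : 0 < a') (hab' : a' < b') (hb' : b' < 1) :
    (∀ z ∈ Icc ((0 : ℝ), a') (b', b'), (f z).2 ∈ Ioo (β * a') ((c + ρ) * b')) ∧
    (∀ y ∈ Icc a' b', (f (0, y)).1 < 0) ∧
    (∀ y ∈ Icc a' b', (c + ρ) * b' < (f (b', y)).1) := by
  have h00 : f ((0:ℝ), (0:ℝ)) = ((0:ℝ), (0:ℝ)) := hf0
  have hb'0 : 0 < b' := lt_trans ha' hab'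
  -- vertical MVT at x = 0 for both components
  have vert : ∀ y : ℝ, a' ≤ y → y ≤ b' →
      (∃ ξ ∈ Ioo (0:ℝ) y, (f (0, y)).1 =
        (fderivWithin ℝ f sq2 (0, ξ) (0, 1)).1 * y) ∧
      (∃ ξ ∈ Ioo (0:ℝ) y, (f (0, y)).2 =
        (fderivWithin ℝ f sq2 (0, ξ) (0, 1)).2 * y) := by
    intro y hy1 hy2
    have hy0 : 0 < y := lt_of_lt_of_le ha' hy1
    have hy1' : y ≤ 1 := le_of_lt (lt_of_le_of_lt hy2 hb')
    have hx : (0:ℝ) ∈ Icc (-1:ℝ) 1 := by constructor <;> norm_num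
    constructor
    · obtain ⟨ξ, hξ, heq⟩ := mvtV f hf (ContinuousLinearMap.fst ℝ ℝ ℝ) 0 hx y hy0 hy1'
      simp only [ContinuousLinearMap.coe_fst'] at heq
      refine ⟨ξ, hξ, ?_⟩
      rw [h00] at heq; simpa using heq
    · obtain ⟨ξ, hξ, heq⟩ := mvtV f hf (ContinuousLinearMap.snd ℝ ℝ ℝ) 0 hx y hy0 hy1'
      simp only [ContinuousLinearMap.coe_snd'] at heq
      refine ⟨ξ, hξ, ?_⟩
      rw [h00] at heq; simpa using heq
  refine ⟨?_, ?_, ?_⟩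
  · -- condition (i)
    rintro ⟨x, y⟩ hz
    obtain ⟨⟨hx0, hy1⟩, ⟨hx1, hy2⟩⟩ := hz
    simp only at hx0 hy1 hx1 hy2
    obtain ⟨-, ξ, hξ, heq2⟩ := vert y hy1 hy2
    have hmem : ((0:ℝ), ξ) ∈ sq2 := by
      simp only [sq2, mem_Icc, Prod.le_def]
      refine ⟨⟨by norm_num, by linarith [hξ.1]⟩, ⟨by norm_num, ?_⟩⟩
      have := hξ.2; nlinarith
    obtain ⟨hD22l, hD22r⟩ := hd22 _ hmem
    have hy0 : 0 < y := lt_of_lt_of_le ha' hy1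
    rcases eq_or_lt_of_le hx0 with hx | hx
    · -- x = 0
      rw [← hx]
      constructor
      · rw [heq2]; nlinarith
      · rw [heq2]; nlinarith
    · -- x > 0
      have hx1' : x ≤ 1 := le_of_lt (lt_of_le_of_lt hx1 hb')
      have hy' : y ∈ Icc (-1:ℝ) 1 := by
        constructor <;> nlinarith
      obtain ⟨η, hη, heq1⟩ := mvtH f hf (ContinuousLinearMap.snd ℝ ℝ ℝ) y hy' x hx hx1'
      simp only [ContinuousLinearMap.coe_snd'] at heq1
      have hmem' : (η, y) ∈ sq2 := by
        simp only [sq2, mem_Icc, Prod.le_def]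
        refine ⟨⟨le_of_lt (lt_of_lt_of_le (by norm_num) (le_of_lt hη.1)), hy'.1⟩,
          ⟨?_, hy'.2⟩⟩
        have := hη.2; nlinarith
      obtain ⟨hD21l, hD21r⟩ := hd21 _ hmem'
      have hfx : (f (x, y)).2 =
          (fderivWithin ℝ f sq2 (η, y) (1, 0)).2 * x +
          (fderivWithin ℝ f sq2 (0, ξ) (0, 1)).2 * y := by
        rw [← heq2]; linarith [heq1]
      constructor
      · rw [hfx]; nlinarith
      · rw [hfx]; nlinarith
  · -- condition (ii)
    intro y hy
    obtain ⟨ξ, hξ, heq⟩ := (vert y hy.1 hy.2).1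
    have hmem : ((0:ℝ), ξ) ∈ sq2 := by
      simp only [sq2, mem_Icc, Prod.le_def]
      refine ⟨⟨by norm_num, by linarith [hξ.1]⟩, ⟨by norm_num, ?_⟩⟩
      have := hξ.2; have := hy.2; nlinarith
    obtain ⟨hDl, hDr⟩ := hd12 _ hmem
    have hy0 : 0 < y := lt_of_lt_of_le ha' hy.1
    rw [heq]; nlinarith
  · -- condition (iii)
    intro y hy
    obtain ⟨ξ, hξ, heq2⟩ := (vert y hy.1 hy.2).1
    have hmemξ : ((0:ℝ), ξ) ∈ sq2 := by
      simp only [sq2, mem_Icc, Prod.le_def]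
      refine ⟨⟨by norm_num, by linarith [hξ.1]⟩, ⟨by norm_num, ?_⟩⟩
      have := hξ.2; have := hy.2; nlinarith
    obtain ⟨hD2l, hD2r⟩ := hd12 _ hmemξ
    have hy0 : 0 < y := lt_of_lt_of_le ha' hy.1
    have hy' : y ∈ Icc (-1:ℝ) 1 := by
      constructor <;> nlinarith [hy.1, hy.2]
    obtain ⟨η, hη, heq1⟩ := mvtH f hf (ContinuousLinearMap.fst ℝ ℝ ℝ) y hy' b' hb'0 (le_of_lt hb')
    simp only [ContinuousLinearMap.coe_fst'] at heq1
    have hmemη : (η, y) ∈ sq2 := by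
      simp only [sq2, mem_Icc, Prod.le_def]
      refine ⟨⟨le_of_lt (lt_of_lt_of_le (by norm_num) (le_of_lt hη.1)), hy'.1⟩,
        ⟨?_, hy'.2⟩⟩
      have := hη.2; nlinarith
    have hD1 := hd11 _ hmemη
    have : (f (b', y)).1 =
        (fderivWithin ℝ f sq2 (η, y) (1, 0)).1 * b' +
        (fderivWithin ℝ f sq2 (0, ξ) (0, 1)).1 * y := by
      rw [← heq2]; linarith [heq1]
    rw [this]; nlinarith [hy.2]

/-- iterated approach to the fixed point. Under the hypotheses of the
rectangle covering lemma together with `c + ρ < 1`, setting `a_k = β^k a` and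
`b_k = (c+ρ)^k b`, one has `0 < a_k < b_k < 1` for all `k`, the covering conditions
hold for every `k`, and `b_k → 0`, so the rectangles `[0,b_k]×[a_k,b_k]`
accumulate at the fixed point `0` while remaining in the closed first quadrant
minus the origin. -/
theorem iterated_rectangle_covering
    (f : ℝ × ℝ → ℝ × ℝ) (hf : ContDiffOn ℝ 1 f sq2) (hf0 : f 0 = 0)
    (α β ρ c : ℝ) (hα : 0 < α) (hβ : 0 < β) (hρ : 0 < ρ) (hc : 0 < c)
    (hρβ : β < ρ) (hαc : 2 * c + ρ < α) (hcρ : c + ρ < 1)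
    (hd11 : ∀ z ∈ sq2, α < (fderivWithin ℝ f sq2 z (1, 0)).1)
    (hd12 : ∀ z ∈ sq2, (fderivWithin ℝ f sq2 z (0, 1)).1 ∈ Ioo (-c) 0)
    (hd21 : ∀ z ∈ sq2, (fderivWithin ℝ f sq2 z (1, 0)).2 ∈ Ioo 0 c)
    (hd22 : ∀ z ∈ sq2, (fderivWithin ℝ f sq2 z (0, 1)).2 ∈ Ioo β ρ)
    (a b : ℝ) (ha : 0 < a) (hab : a < b) (hb : b < 1) :
    (∀ k : ℕ, 0 < β ^ k * a ∧ β ^ k * a < (c + ρ) ^ k * b ∧ (c + ρ) ^ k * b < 1) ∧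
    (∀ k : ℕ,
      (∀ z ∈ Icc ((0 : ℝ), β ^ k * a) ((c + ρ) ^ k * b, (c + ρ) ^ k * b),
        (f z).2 ∈ Ioo (β ^ (k + 1) * a) ((c + ρ) ^ (k + 1) * b)) ∧
      (∀ y ∈ Icc (β ^ k * a) ((c + ρ) ^ k * b), (f (0, y)).1 < 0) ∧
      (∀ y ∈ Icc (β ^ k * a) ((c + ρ) ^ k * b),
        (c + ρ) ^ (k + 1) * b < (f ((c + ρ) ^ k * b, y)).1)) ∧
    Tendsto (fun k : ℕ => (c + ρ) ^ k * b) atTop (nhds 0) := by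
  have hcρ0 : 0 < c + ρ := by linarith
  have hβcρ : β ≤ c + ρ := by linarith
  have hkey : ∀ k : ℕ, 0 < β ^ k * a ∧ β ^ k * a < (c + ρ) ^ k * b ∧
      (c + ρ) ^ k * b < 1 := by
    intro k
    refine ⟨by positivity, ?_, ?_⟩
    · calc β ^ k * a ≤ (c + ρ) ^ k * a := by gcongr
          _ < (c + ρ) ^ k * b := by gcongr
    · calc (c + ρ) ^ k * b ≤ 1 * b := by
            gcongr
            · linarith
            · exact pow_le_one₀ hcρ0.le hcρ.le
          _ < 1 := by linarith
  refine ⟨hkey, ?_, ?_⟩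
  · intro k
    obtain ⟨h1, h2, h3⟩ := hkey k
    obtain ⟨c1, c2, c3⟩ := stepCover f hf hf0 α β ρ c hα hβ hρ hc hαc
      hd11 hd12 hd21 hd22 (β ^ k * a) ((c + ρ) ^ k * b) h1 h2 h3
    have e1 : β ^ (k + 1) * a = β * (β ^ k * a) := by ring
    have e2 : (c + ρ) ^ (k + 1) * b = (c + ρ) * ((c + ρ) ^ k * b) := by ring
    rw [e1, e2]
    exact ⟨c1, c2, c3⟩
  · have := (tendsto_pow_atTop_nhds_zero_of_lt_one hcρ0.le hcρ).mul_const b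
    simpa using this
end
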